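/- Let $(\lambda_n)_{n\ge2}$ be positive reals with $\sum_{n\ge2}\lambda_n^{-1}<\infty$, let $X_i$ be independent Exp($\lambda_i$) variables and $T_n = \sum_{i=n+1}^\infty X_i$. Then for every $u < \inf_{i>n}\lambda_i$ one has $\mathbb{E}[e^{u T_n}] = \prod_{i=n+1}^\infty \frac{\lambda_i}{\lambda_i - u}$, and the infinite product converges. -/

import Mathlib

open MeasureTheory ProbabilityTheory Filter Topology Set

lemma abs_log_one_add_le_two_mul {x : ℝ} (hx : |x| ≤ 1/2) :
    |Real.log (1 + x)| ≤ 2 * |x| := by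
  obtain ⟨hx1, hx2⟩ := abs_le.mp hx
  have h1 : (0:ℝ) < 1 + x := by linarith
  have hub : Real.log (1 + x) ≤ x := by
    have := Real.log_le_sub_one_of_pos h1; linarith
  have hlb : -(2 * |x|) ≤ Real.log (1 + x) := by
    have h2 : Real.log (1 + x)⁻¹ ≤ (1 + x)⁻¹ - 1 :=
      Real.log_le_sub_one_of_pos (by positivity)
    rw [Real.log_inv] at h2
    have h3 : (1 + x)⁻¹ - 1 ≤ 2 * |x| := by
      rw [sub_le_iff_le_add, inv_le_iff_one_le_mul₀ h1]
      have hax : -x ≤ |x| := neg_le_abs x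
      nlinarith [abs_nonneg x]
    linarith
  rw [abs_le]
  exact ⟨hlb, hub.trans ((le_abs_self x).trans (by linarith [abs_nonneg x]))⟩

lemma integral_exp_neg_mul_Ioi' {c : ℝ} (hc : 0 < c) :
    ∫ x in Ioi (0:ℝ), Real.exp (-(c * x)) = c⁻¹ := by
  have := integral_comp_mul_left_Ioi (fun x => Real.exp (-x)) 0 hc
  simp only [mul_zero] at this
  rw [this, integral_exp_neg_Ioi_zero, smul_eq_mul, mul_one]

lemma lintegral_exp_expMeasure {r u : ℝ} (hr : 0 < r) (hu : u < r) :
    ∫⁻ x, ENNReal.ofReal (Real.exp (u * x)) ∂(expMeasure r)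
      = ENNReal.ofReal (r / (r - u)) := by
  have hru : 0 < r - u := by linarith
  rw [expMeasure, gammaMeasure,
    lintegral_withDensity_eq_lintegral_mul _
      (by exact (measurable_gammaPDFReal 1 r).ennreal_ofReal) (by fun_prop)]
  have h0 : ∀ᵐ (x : ℝ), x ≠ 0 := by
    rw [ae_iff]; simpa using measure_singleton (0:ℝ)
  have hae : (fun x => (gammaPDF 1 r * fun x => ENNReal.ofReal (Real.exp (u * x))) x)
      =ᵐ[volume] (Ioi (0:ℝ)).indicator
        (fun x => ENNReal.ofReal (r * Real.exp (-((r - u) * x)))) := by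
    filter_upwards [h0] with x hx
    rcases lt_or_gt_of_ne hx with h | h
    · simp [gammaPDF_of_neg h, indicator_of_notMem (notMem_Ioi.mpr h.le)]
    · have hpdf : gammaPDF 1 r x = ENNReal.ofReal (r * Real.exp (-(r * x))) :=
        exponentialPDF_of_nonneg h.le
      simp only [Pi.mul_apply, hpdf, indicator_of_mem (mem_Ioi.mpr h)]
      rw [← ENNReal.ofReal_mul (by positivity)]
      congr 1
      rw [mul_assoc, ← Real.exp_add]
      ring_nf
  rw [lintegral_congr_ae hae, lintegral_indicator measurableSet_Ioi]
  have hint : IntegrableOn (fun x => r * Real.exp (-((r - u) * x))) (Ioi (0:ℝ)) := by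
    have := (exp_neg_integrableOn_Ioi 0 hru).const_mul r
    simpa [neg_mul, IntegrableOn] using this.congr (Filter.Eventually.of_forall fun x => by ring_nf)
  rw [← ofReal_integral_eq_lintegral_ofReal hint
    (Filter.Eventually.of_forall fun x => by positivity)]
  rw [integral_const_mul, integral_exp_neg_mul_Ioi' hru, div_eq_mul_inv]

lemma ae_nonneg_of_map_expMeasure {Ω : Type*} [MeasurableSpace Ω] {P : Measure Ω}
    {X : Ω → ℝ} (hX : Measurable X) {r : ℝ}
    (hmap : Measure.map X P = expMeasure r) : ∀ᵐ ω ∂P, 0 ≤ X ω := by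
  rw [ae_iff]
  have : {ω | ¬ 0 ≤ X ω} = X ⁻¹' (Iio 0) := by ext ω; simp [not_le]
  rw [this, ← Measure.map_apply hX measurableSet_Iio, hmap, expMeasure, gammaMeasure,
    withDensity_apply _ measurableSet_Iio]
  exact lintegral_exponentialPDF_of_nonpos le_rfl

lemma exp_mul_integrable_and_integral {Ω : Type*} [MeasurableSpace Ω] {P : Measure Ω}
    {X : Ω → ℝ} (hX : Measurable X) {r u : ℝ} (hr : 0 < r) (hu : u < r)
    (hmap : Measure.map X P = expMeasure r) :
    Integrable (fun ω => Real.exp (u * X ω)) P ∧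
      ∫ ω, Real.exp (u * X ω) ∂P = r / (r - u) := by
  have hlin : ∫⁻ ω, ENNReal.ofReal (Real.exp (u * X ω)) ∂P
      = ENNReal.ofReal (r / (r - u)) := by
    rw [← lintegral_exp_expMeasure hr hu, ← hmap, lintegral_map (by fun_prop) hX]
  have hint : Integrable (fun ω => Real.exp (u * X ω)) P := by
    refine ⟨((hX.const_mul u).exp).aestronglyMeasurable, ?_⟩
    rw [hasFiniteIntegral_iff_ofReal (Filter.Eventually.of_forall fun ω => by positivity)]
    rw [hlin]; exact ENNReal.ofReal_lt_top
  refine ⟨hint, ?_⟩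
  rw [integral_eq_lintegral_of_nonneg_ae
    (Filter.Eventually.of_forall fun ω => by positivity) hint.1, hlin,
    ENNReal.toReal_ofReal (le_of_lt (div_pos hr (by linarith)))]

theorem hitting_time_mgf {Ω : Type*} [MeasurableSpace Ω]
    (P : Measure Ω) [IsProbabilityMeasure P]
    (lam : ℕ → ℝ) (hpos : ∀ n, 0 < lam n)
    (hsum : Summable fun n => (lam n)⁻¹)
    (X : ℕ → Ω → ℝ) (hmeas : ∀ i, Measurable (X i))
    (hindep : iIndepFun X P)
    (hexp : ∀ i, Measure.map (X i) P = expMeasure (lam i))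
    (T : ℕ → Ω → ℝ) (hTmeas : ∀ n, Measurable (T n))
    (hT : ∀ᵐ ω ∂P, ∀ n, HasSum (fun i => X (n + 1 + i) ω) (T n ω)) :
    ∀ n : ℕ, ∀ u : ℝ, (∀ i, n < i → u < lam i) →
      HasProd (fun i : ℕ => lam (n + 1 + i) / (lam (n + 1 + i) - u))
        (∫ ω, Real.exp (u * T n ω) ∂P) := by
  intro n u hu
  set a : ℕ → ℝ := fun i => lam (n + 1 + i) with ha
  have hai : ∀ i, 0 < a i := fun i => hpos _
  have hua : ∀ i, u < a i := fun i => hu _ (by omega)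
  have haiu : ∀ i, 0 < a i - u := fun i => by linarith [hua i]
  set c : ℕ → ℝ := fun i => a i / (a i - u) with hc
  have hcpos : ∀ i, 0 < c i := fun i => div_pos (hai i) (haiu i)
  have hc1 : ∀ i, c i = 1 + u / (a i - u) := by
    intro i
    rw [hc]
    field_simp [(haiu i).ne']
    ring
  -- a → ∞
  have hsa : Summable (fun i => (a i)⁻¹) :=
    hsum.comp_injective (fun i j h => by simpa using h)
  have h0 : Tendsto (fun i => (a i)⁻¹) atTop (𝓝[>] 0) :=
    tendsto_nhdsWithin_of_tendsto_nhds_of_eventually_within _ hsa.tendsto_atTop_zero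
      (Eventually.of_forall fun i => inv_pos.mpr (hai i))
  have htop : Tendsto a atTop atTop := by
    have h := tendsto_inv_nhdsGT_zero.comp h0
    exact h.congr fun i => inv_inv (a i)
  -- eventual bounds
  have hev : ∀ᶠ i in atTop, |u / (a i - u)| ≤ 2 * |u| * (a i)⁻¹ ∧ |u / (a i - u)| ≤ 1/2 := by
    filter_upwards [htop.eventually_ge_atTop (4 * |u| + 1)] with i hi
    have h1 := haiu i
    have h2 := hai i
    have hax : -u ≤ |u| := neg_le_abs u
    have hax2 : u ≤ |u| := le_abs_self u
    have habs : |u / (a i - u)| = |u| / (a i - u) := by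
      rw [abs_div, abs_of_pos h1]
    have hhalf : a i / 2 ≤ a i - u := by
      nlinarith [abs_nonneg u]
    have hinv : (a i)⁻¹ * a i = 1 := inv_mul_cancel₀ (ne_of_gt h2)
    have hinvnn : 0 ≤ (a i)⁻¹ := (inv_pos.mpr h2).le
    constructor
    · rw [habs, div_le_iff₀ h1]
      nlinarith [mul_le_mul_of_nonneg_left hhalf (mul_nonneg (by positivity : (0:ℝ) ≤ 2 * |u|) hinvnn),
        mul_nonneg (abs_nonneg u) hinvnn]
    · rw [habs, div_le_iff₀ h1]
      nlinarith [abs_nonneg u]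
  -- summable logs
  have hlog : Summable (fun i => Real.log (c i)) := by
    apply Summable.of_norm_bounded_eventually_nat (g := fun i => 2 * (2 * |u| * (a i)⁻¹))
      ((hsa.mul_left (2 * |u|)).mul_left 2)
    filter_upwards [hev] with i hi
    obtain ⟨hi1, hi2⟩ := hi
    rw [Real.norm_eq_abs, hc1 i]
    exact (abs_log_one_add_le_two_mul hi2).trans (by linarith)
  obtain ⟨s, hs⟩ := hlog
  have hprod : HasProd c (Real.exp s) := by
    have h := hs.rexp
    have heq : (Real.exp ∘ fun i => Real.log (c i)) = c := by
      funext i; simp [Function.comp, Real.exp_log (hcpos i)]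
    rwa [heq] at h
  have hpp : Tendsto (fun m => ∏ i ∈ Finset.range m, c i) atTop (𝓝 (Real.exp s)) :=
    hprod.tendsto_prod_nat
  -- integrability of each factor
  have hint : ∀ j, n < j → Integrable (fun ω => Real.exp (u * X j ω)) P :=
    fun j hj => (exp_mul_integrable_and_integral (hmeas j) (hpos j) (hu j hj) (hexp j)).1
  have hsingle : ∀ j, ∫ ω, Real.exp (u * X (n + 1 + j) ω) ∂P = c j :=
    fun j => (exp_mul_integrable_and_integral (hmeas _) (hai j) (hua j) (hexp _)).2
  set e : ℕ ↪ ℕ := ⟨fun i => n + 1 + i, fun i j h => by simpa using h⟩ with he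
  -- mgf of partial sums
  have hmgf : ∀ m, ∫ ω, Real.exp (u * ∑ i ∈ Finset.range m, X (n + 1 + i) ω) ∂P
      = ∏ i ∈ Finset.range m, c i := by
    intro m
    have h1 := hindep.mgf_sum (t := u) hmeas ((Finset.range m).map e)
    rw [Finset.prod_map, Finset.sum_map] at h1
    simp only [mgf, Finset.sum_apply, he, Function.Embedding.coeFn_mk] at h1
    refine h1.trans ?_
    exact Finset.prod_congr rfl fun j _ => hsingle j
  -- integrability of exp of partial sums
  have hSint : ∀ m, Integrable
      (fun ω => Real.exp (u * ∑ i ∈ Finset.range m, X (n + 1 + i) ω)) P := by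
    intro m
    have h1 := hindep.integrable_exp_mul_sum (t := u) hmeas
      (s := (Finset.range m).map e) (fun i hi => by
        obtain ⟨j, _, rfl⟩ := Finset.mem_map.mp hi
        exact hint _ (by simp only [he, Function.Embedding.coeFn_mk]; show n < n + 1 + j; omega))
    simp only [Finset.sum_map, Finset.sum_apply, he, Function.Embedding.coeFn_mk] at h1
    exact h1
  -- a.e. pointwise facts
  have hX0 : ∀ᵐ ω ∂P, ∀ j, 0 ≤ X j ω :=
    ae_all_iff.mpr fun j => ae_nonneg_of_map_expMeasure (hmeas j) (hexp j)
  have haeP : ∀ᵐ ω ∂P,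
      (Monotone fun m => ∑ i ∈ Finset.range m, X (n + 1 + i) ω) ∧
      Tendsto (fun m => ∑ i ∈ Finset.range m, X (n + 1 + i) ω) atTop (𝓝 (T n ω)) := by
    filter_upwards [hT, hX0] with ω hω h0ω
    refine ⟨?_, (hω n).tendsto_sum_nat⟩
    intro m m' hm
    exact Finset.sum_le_sum_of_subset_of_nonneg (Finset.range_subset_range.mpr hm)
      fun i _ _ => h0ω _
  -- the key identity
  suffices hL : ∫ ω, Real.exp (u * T n ω) ∂P = Real.exp s by
    rw [hL]; exact hprod
  rcases le_or_gt u 0 with hu0 | hu0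
  · -- dominated convergence, bound 1
    have hdct := tendsto_integral_of_dominated_convergence (μ := P)
      (F := fun m ω => Real.exp (u * ∑ i ∈ Finset.range m, X (n + 1 + i) ω))
      (f := fun ω => Real.exp (u * T n ω)) (fun _ => 1)
      (fun m => (hSint m).1) (integrable_const 1)
      (fun m => by
        filter_upwards [hX0] with ω h0ω
        rw [Real.norm_eq_abs, abs_of_pos (Real.exp_pos _), ← Real.exp_zero]
        apply Real.exp_le_exp.mpr
        have : 0 ≤ ∑ i ∈ Finset.range m, X (n + 1 + i) ω :=
          Finset.sum_nonneg fun i _ => h0ω _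
        exact mul_nonpos_of_nonpos_of_nonneg hu0 this)
      (by
        filter_upwards [haeP] with ω hω
        exact (hω.2.const_mul u).rexp)
    have hdct' : Tendsto (fun m => ∏ i ∈ Finset.range m, c i) atTop
        (𝓝 (∫ ω, Real.exp (u * T n ω) ∂P)) := by
      have : (fun m => ∫ ω, Real.exp (u * ∑ i ∈ Finset.range m, X (n + 1 + i) ω) ∂P)
          = fun m => ∏ i ∈ Finset.range m, c i := funext hmgf
      rwa [this] at hdct
    exact tendsto_nhds_unique hdct' hpp
  · -- monotone convergence in ℝ≥0∞
    have hmono : ∀ᵐ ω ∂P, Monotone fun m =>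
        ENNReal.ofReal (Real.exp (u * ∑ i ∈ Finset.range m, X (n + 1 + i) ω)) := by
      filter_upwards [haeP] with ω hω
      intro m m' hm
      exact ENNReal.ofReal_le_ofReal (Real.exp_le_exp.mpr
        (mul_le_mul_of_nonneg_left (hω.1 hm) hu0.le))
    have htend : ∀ᵐ ω ∂P, Tendsto (fun m =>
        ENNReal.ofReal (Real.exp (u * ∑ i ∈ Finset.range m, X (n + 1 + i) ω))) atTop
        (𝓝 (ENNReal.ofReal (Real.exp (u * T n ω)))) := by
      filter_upwards [haeP] with ω hω
      exact (ENNReal.continuous_ofReal.tendsto _).comp (hω.2.const_mul u).rexp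
    have hlt := lintegral_tendsto_of_tendsto_of_monotone
      (f := fun m ω => ENNReal.ofReal (Real.exp (u * ∑ i ∈ Finset.range m, X (n + 1 + i) ω)))
      (F := fun ω => ENNReal.ofReal (Real.exp (u * T n ω)))
      (fun m => (by fun_prop : Measurable fun ω =>
        ENNReal.ofReal (Real.exp (u * ∑ i ∈ Finset.range m, X (n + 1 + i) ω))).aemeasurable)
      hmono htend
    have heqm : (fun m => ∫⁻ ω, ENNReal.ofReal
        (Real.exp (u * ∑ i ∈ Finset.range m, X (n + 1 + i) ω)) ∂P)
        = fun m => ENNReal.ofReal (∏ i ∈ Finset.range m, c i) := by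
      funext m
      rw [← ofReal_integral_eq_lintegral_ofReal (hSint m)
        (Filter.Eventually.of_forall fun ω => (Real.exp_pos _).le), hmgf m]
    rw [heqm] at hlt
    have hlt2 : Tendsto (fun m => ENNReal.ofReal (∏ i ∈ Finset.range m, c i)) atTop
        (𝓝 (ENNReal.ofReal (Real.exp s))) :=
      (ENNReal.continuous_ofReal.tendsto _).comp hpp
    have hkey : ∫⁻ ω, ENNReal.ofReal (Real.exp (u * T n ω)) ∂P
        = ENNReal.ofReal (Real.exp s) := tendsto_nhds_unique hlt hlt2
    have hTint : Integrable (fun ω => Real.exp (u * T n ω)) P := by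
      refine ⟨(((hTmeas n).const_mul u).exp).aestronglyMeasurable, ?_⟩
      rw [hasFiniteIntegral_iff_ofReal (Filter.Eventually.of_forall
        fun ω => (Real.exp_pos _).le), hkey]
      exact ENNReal.ofReal_lt_top
    rw [integral_eq_lintegral_of_nonneg_ae (Filter.Eventually.of_forall
      fun ω => (Real.exp_pos _).le) hTint.1, hkey,
      ENNReal.toReal_ofReal (Real.exp_pos _).le]
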